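/- Let {W_i}_{i=1}^n ⊂ Gr(F,k,m) with projections P_i. Then min_{i≠j} d_c²(W_i, W_j) ≤ m(k−m)n/(k(n−1)), where d_c²(W_i,W_j) = m − tr(P_i P_j). Moreover, equality holds if and only if {W_i} is an equichordal tight fusion frame, i.e., tr(P_i P_j) is constant for i ≠ j and Σ_i P_i = (nm/k)·I_k. -/

import Mathlib

open Matrix

private lemma re_trace_sq {F : Type*} [RCLike F] {k : ℕ}
    (A : Matrix (Fin k) (Fin k) F) :
    RCLike.re (Matrix.trace (Aᴴ * A)) = ∑ j, ∑ i, ‖A i j‖ ^ 2 := by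
  rw [Matrix.trace]
  simp only [Matrix.diag, Matrix.mul_apply, Matrix.conjTranspose_apply, map_sum]
  refine Finset.sum_congr rfl fun j _ => Finset.sum_congr rfl fun i _ => ?_
  rw [RCLike.star_def, RCLike.conj_mul, ← RCLike.ofReal_pow, RCLike.ofReal_re]

private lemma re_trace_sq_nonneg {F : Type*} [RCLike F] {k : ℕ}
    (A : Matrix (Fin k) (Fin k) F) :
    0 ≤ RCLike.re (Matrix.trace (Aᴴ * A)) := by
  rw [re_trace_sq]
  exact Finset.sum_nonneg fun j _ => Finset.sum_nonneg fun i _ => sq_nonneg _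

private lemma re_trace_sq_eq_zero {F : Type*} [RCLike F] {k : ℕ}
    (A : Matrix (Fin k) (Fin k) F) :
    RCLike.re (Matrix.trace (Aᴴ * A)) = 0 ↔ A = 0 := by
  rw [re_trace_sq]
  constructor
  · intro h
    ext i j
    have h1 := (Finset.sum_eq_zero_iff_of_nonneg
      (fun j _ => Finset.sum_nonneg fun i _ => sq_nonneg ‖A i j‖)).mp h j (Finset.mem_univ j)
    have h2 := (Finset.sum_eq_zero_iff_of_nonneg
      (fun i _ => sq_nonneg ‖A i j‖)).mp h1 i (Finset.mem_univ i)
    simpa using pow_eq_zero_iff (n := 2) (by norm_num) |>.mp h2 |> norm_eq_zero.mp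
  · rintro rfl; simp

theorem simplex_bound {F : Type*} [RCLike F] {k m n : ℕ}
    (hk : 0 < k) (hn : 2 ≤ n)
    (P : Fin n → Matrix (Fin k) (Fin k) F)
    (hproj : ∀ i, (P i)ᴴ = P i ∧ P i * P i = P i)
    (htr : ∀ i, Matrix.trace (P i) = (m : F)) :
    sInf {x : ℝ | ∃ i j, i ≠ j ∧
        x = (m : ℝ) - RCLike.re (Matrix.trace (P i * P j))}
      ≤ (m : ℝ) * ((k : ℝ) - m) * n / ((k : ℝ) * ((n : ℝ) - 1)) ∧
    (sInf {x : ℝ | ∃ i j, i ≠ j ∧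
        x = (m : ℝ) - RCLike.re (Matrix.trace (P i * P j))}
      = (m : ℝ) * ((k : ℝ) - m) * n / ((k : ℝ) * ((n : ℝ) - 1)) ↔
      ((∃ c : ℝ, ∀ i j, i ≠ j → RCLike.re (Matrix.trace (P i * P j)) = c) ∧
        (∑ i, P i) = (((n : ℝ) * m / k : ℝ) : F) • 1)) := by
  classical
  -- basic real constants
  have hkR : (0:ℝ) < k := by exact_mod_cast hk
  have hnR : (2:ℝ) ≤ n := by exact_mod_cast hn
  have hN : (0:ℝ) < (n:ℝ) * ((n:ℝ) - 1) := by nlinarith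
  set B : ℝ := (m : ℝ) * ((k : ℝ) - m) * n / ((k : ℝ) * ((n : ℝ) - 1)) with hB
  set t : Fin n → Fin n → ℝ := fun i j => RCLike.re (Matrix.trace (P i * P j)) with htdef
  set S : Matrix (Fin k) (Fin k) F := ∑ i, P i with hSdef
  set c : ℝ := (n:ℝ) * m / k with hc
  -- the finset of off-diagonal pairs
  set s : Finset (Fin n × Fin n) := Finset.univ.offDiag with hs
  set f : Fin n × Fin n → ℝ := fun p => (m:ℝ) - t p.1 p.2 with hf
  have hmem : ∀ p : Fin n × Fin n, p ∈ s ↔ p.1 ≠ p.2 := by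
    intro p; simp [hs, Finset.mem_offDiag]
  have hsne : s.Nonempty := by
    refine ⟨(⟨0, by omega⟩, ⟨1, by omega⟩), (hmem _).mpr ?_⟩
    simp [Fin.ext_iff]
  have hcard : (s.card : ℝ) = (n:ℝ) * ((n:ℝ) - 1) := by
    have h1 : s.card = n * n - n := by
      rw [hs, Finset.offDiag_card, Finset.card_univ, Fintype.card_fin]
    have hle : n ≤ n * n := Nat.le_mul_of_pos_left n (by omega)
    rw [h1, Nat.cast_sub hle]
    push_cast
    ring
  -- the set equals the image finset
  have hDeq : {x : ℝ | ∃ i j, i ≠ j ∧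
      x = (m : ℝ) - RCLike.re (Matrix.trace (P i * P j))} = ↑(s.image f) := by
    ext x
    simp only [Set.mem_setOf_eq, Finset.coe_image, Set.mem_image, Finset.mem_coe]
    constructor
    · rintro ⟨i, j, hij, rfl⟩
      exact ⟨(i, j), (hmem _).mpr hij, rfl⟩
    · rintro ⟨p, hp, rfl⟩
      exact ⟨p.1, p.2, (hmem _).mp hp, rfl⟩
  have himgne : (s.image f).Nonempty := hsne.image f
  have hInf : sInf {x : ℝ | ∃ i j, i ≠ j ∧
      x = (m : ℝ) - RCLike.re (Matrix.trace (P i * P j))} = (s.image f).min' himgne := by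
    rw [hDeq]; exact Finset.Nonempty.csInf_eq_min' himgne
  set μ : ℝ := (s.image f).min' himgne with hμ
  -- trace of S
  have htrS : Matrix.trace S = ((((n:ℝ) * m : ℝ)) : F) := by
    rw [hSdef, Matrix.trace_sum]
    simp [htr]
  -- Hermitian-ness of S
  have hSH : Sᴴ = S := by
    rw [hSdef, Matrix.conjTranspose_sum]
    exact Finset.sum_congr rfl fun i _ => (hproj i).1
  -- R = re trace (S*S)
  set R : ℝ := RCLike.re (Matrix.trace (S * S)) with hR
  have hRsum : R = ∑ i, ∑ j, t i j := by
    rw [hR, hSdef, Finset.sum_mul_sum, Matrix.trace_sum]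
    simp only [Matrix.trace_sum, map_sum]
    rfl
  have hdiag : ∀ i, t i i = (m:ℝ) := by
    intro i
    simp [htdef, (hproj i).2, htr i]
  -- key: R ≥ (nm)²/k with equality iff S is the scalar matrix
  have hAkey : R - ((n:ℝ)*m)^2 / k = RCLike.re (Matrix.trace ((S - (c:F) • 1)ᴴ * (S - (c:F) • 1))) := by
    have hCS : ((c:F) • (1:Matrix (Fin k) (Fin k) F)) * S = (c:F) • S := by
      rw [smul_mul_assoc, one_mul]
    have hSC : S * ((c:F) • (1:Matrix (Fin k) (Fin k) F)) = (c:F) • S := by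
      rw [mul_smul_comm, mul_one]
    have hCC : ((c:F) • (1:Matrix (Fin k) (Fin k) F)) * ((c:F) • 1) = ((c:F)*c) • 1 := by
      rw [smul_mul_assoc, one_mul, smul_smul]
    have hexp : (S - (c:F) • 1)ᴴ * (S - (c:F) • 1)
        = S * S - (c:F) • S - (c:F) • S + ((c:F) * c) • (1 : Matrix (Fin k) (Fin k) F) := by
      rw [Matrix.conjTranspose_sub, hSH]
      rw [Matrix.conjTranspose_smul, Matrix.conjTranspose_one]
      have hstar : star ((c:F)) = (c:F) := by
        simp [RCLike.star_def, RCLike.conj_ofReal]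
      rw [hstar, sub_mul, mul_sub, mul_sub, hCS, hSC, hCC]
      abel
    rw [hexp]
    have h1 : Matrix.trace (S * S - (c:F) • S - (c:F) • S + ((c:F) * c) • (1 : Matrix (Fin k) (Fin k) F))
        = Matrix.trace (S * S) - (c:F) * Matrix.trace S - (c:F) * Matrix.trace S
          + (c:F) * c * k := by
      simp only [Matrix.trace_sub, Matrix.trace_add, Matrix.trace_smul, Matrix.trace_one,
        smul_eq_mul, Fintype.card_fin]
    rw [h1, htrS]
    have : ((c:F)) * ((((n:ℝ) * m : ℝ)) : F) = ((c * ((n:ℝ)*m) : ℝ) : F) := by push_cast; ring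
    rw [this]
    have h2 : ((c:F)) * (c:F) * (k:F) = ((c * c * k : ℝ) : F) := by push_cast; ring
    rw [h2]
    simp only [map_sub, map_add, RCLike.ofReal_re]
    have hck : c * ((n:ℝ)*m) = ((n:ℝ)*m)^2 / k ∧ c * c * k = ((n:ℝ)*m)^2 / k := by
      constructor <;> (rw [hc]; field_simp)
    rw [hck.1, hck.2, ← hR]
    ring
  have hkey_le : ((n:ℝ)*m)^2 / k ≤ R := by
    have := re_trace_sq_nonneg (S - (c:F) • 1)
    linarith [hAkey ▸ this]
  have hkey_eq : R = ((n:ℝ)*m)^2 / k ↔ S = (c:F) • 1 := by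
    constructor
    · intro h
      have h0 : RCLike.re (Matrix.trace ((S - (c:F) • 1)ᴴ * (S - (c:F) • 1))) = 0 := by
        rw [← hAkey, h]; ring
      have := (re_trace_sq_eq_zero _).mp h0
      have := sub_eq_zero.mp this
      exact this
    · intro h
      rw [hR, h]
      have : ((c:F) • (1:Matrix (Fin k) (Fin k) F)) * ((c:F) • 1) = ((c*c:ℝ):F) • 1 := by
        simp only [smul_mul_assoc, mul_smul_comm, one_mul, smul_smul]
        push_cast
        ring_nf
      rw [this, Matrix.trace_smul, Matrix.trace_one, smul_eq_mul]
      simp only [Fintype.card_fin]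
      rw [show ((c*c:ℝ):F) * (k:F) = ((c*c*k : ℝ):F) by push_cast; ring,
        RCLike.ofReal_re, hc]
      field_simp
  -- sum over off-diagonal pairs
  have hsum_off : ∑ p ∈ s, t p.1 p.2 = R - (n:ℝ) * m := by
    have hsplit : ∑ p ∈ (Finset.univ : Finset (Fin n)).diag, t p.1 p.2
        + ∑ p ∈ s, t p.1 p.2 = ∑ p ∈ Finset.univ ×ˢ Finset.univ, t p.1 p.2 := by
      rw [← Finset.sum_union (Finset.disjoint_diag_offDiag _), Finset.diag_union_offDiag]
    have hdiagsum : ∑ p ∈ (Finset.univ : Finset (Fin n)).diag, t p.1 p.2 = (n:ℝ) * m := by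
      rw [Finset.sum_diag]
      simp [hdiag]
    have hprod : ∑ p ∈ Finset.univ ×ˢ Finset.univ, t p.1 p.2 = R := by
      rw [hRsum, Finset.sum_product]
    rw [hdiagsum, hprod] at hsplit
    linarith
  have hsum_f : ∑ p ∈ s, f p = (s.card : ℝ) * m - (R - (n:ℝ)*m) := by
    simp only [hf, Finset.sum_sub_distrib, Finset.sum_const, nsmul_eq_mul, hsum_off]
  -- the central algebra fact: N*B = N*m - ((nm)²/k - nm)
  have hNB : (n:ℝ) * ((n:ℝ)-1) * B = (n:ℝ) * ((n:ℝ)-1) * m - (((n:ℝ)*m)^2 / k - (n:ℝ)*m) := by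
    have hk0 : (k:ℝ) ≠ 0 := ne_of_gt hkR
    have hn1 : (n:ℝ) - 1 ≠ 0 := by nlinarith
    rw [hB]
    field_simp
    ring
  -- min' ≤ each f p
  have hmin_le : ∀ p ∈ s, μ ≤ f p := fun p hp =>
    Finset.min'_le _ _ (Finset.mem_image_of_mem f hp)
  have hcard_smul : (s.card : ℝ) * μ ≤ ∑ p ∈ s, f p := by
    have := Finset.card_nsmul_le_sum s f μ hmin_le
    simpa [nsmul_eq_mul] using this
  -- first part: μ ≤ B
  have hμB : μ ≤ B := by
    have h2 : (s.card:ℝ) * μ ≤ (n:ℝ)*((n:ℝ)-1) * B := by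
      calc (s.card:ℝ) * μ ≤ ∑ p ∈ s, f p := hcard_smul
        _ = (s.card:ℝ)*m - (R - (n:ℝ)*m) := hsum_f
        _ ≤ (n:ℝ)*((n:ℝ)-1)*m - (((n:ℝ)*m)^2/k - (n:ℝ)*m) := by
            rw [hcard]; linarith [hkey_le]
        _ = (n:ℝ)*((n:ℝ)-1)*B := hNB.symm
    rw [hcard] at h2
    exact le_of_mul_le_mul_left h2 hN
  refine ⟨hInf ▸ hμB, ?_⟩
  rw [hInf]
  constructor
  · -- forward: equality implies ETFF
    intro hμeq
    -- sum of f over s equals N * μ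
    have hub : ∑ p ∈ s, f p ≤ (s.card : ℝ) * μ := by
      rw [hsum_f, hcard, hμeq, hNB]
      linarith [hkey_le]
    have hsumeq : ∑ p ∈ s, f p = (s.card : ℝ) * μ := le_antisymm hub hcard_smul
    -- each f p = μ
    have hfconst : ∀ p ∈ s, f p = μ := by
      have hz : ∑ p ∈ s, (f p - μ) = 0 := by
        rw [Finset.sum_sub_distrib, hsumeq, Finset.sum_const, nsmul_eq_mul]
        ring
      intro p hp
      have := (Finset.sum_eq_zero_iff_of_nonneg
        (fun q hq => sub_nonneg.mpr (hmin_le q hq))).mp hz p hp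
      linarith [this]
    -- R equals (nm)²/k
    have hReq : R = ((n:ℝ)*m)^2 / k := by
      have h1 : (s.card : ℝ) * m - (R - (n:ℝ)*m) = (s.card : ℝ) * μ := by
        rw [← hsum_f, hsumeq]
      rw [hcard, hμeq, hNB] at h1
      linarith
    refine ⟨⟨(m:ℝ) - B, fun i j hij => ?_⟩, ?_⟩
    · have h1 := hfconst (i, j) ((hmem _).mpr hij)
      have h2 : (m:ℝ) - RCLike.re (Matrix.trace (P i * P j)) = μ := h1
      rw [hμeq] at h2
      linarith
    · exact hc ▸ (hkey_eq.mp hReq)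
  · -- backward: ETFF implies equality
    rintro ⟨⟨c₀, hc₀⟩, hSsc⟩
    have hSc : S = (c:F) • 1 := hSsc
    have hReq : R = ((n:ℝ)*m)^2 / k := hkey_eq.mpr hSc
    -- all f p equal m - c₀
    have hfeq : ∀ p ∈ s, f p = (m:ℝ) - c₀ := by
      intro p hp
      have h1 : f p = (m:ℝ) - RCLike.re (Matrix.trace (P p.1 * P p.2)) := rfl
      rw [h1, hc₀ p.1 p.2 ((hmem _).mp hp)]
    have hsum2 : ∑ p ∈ s, f p = (s.card : ℝ) * ((m:ℝ) - c₀) := by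
      rw [Finset.sum_congr rfl hfeq, Finset.sum_const, nsmul_eq_mul]
    have hval : (m:ℝ) - c₀ = B := by
      have h1 : (s.card : ℝ) * m - (R - (n:ℝ)*m) = (s.card : ℝ) * ((m:ℝ) - c₀) := by
        rw [← hsum_f, hsum2]
      rw [hcard, hReq] at h1
      have h2 : (n:ℝ) * ((n:ℝ)-1) * ((m:ℝ) - c₀) = (n:ℝ) * ((n:ℝ)-1) * B := by
        rw [hNB]; linarith
      exact mul_left_cancel₀ (ne_of_gt hN) h2
    -- min' of a set whose elements are all B
    have hμmem := Finset.min'_mem (s.image f) himgne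
    obtain ⟨p, hp, hpf⟩ := Finset.mem_image.mp hμmem
    rw [hμ, ← hpf, hfeq p hp, hval]
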